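/- Let {pᵗ} be a sequence in Ω_{k,p⁰,δ} with pᵗ⁺¹ a projection of pᵗ - (1/L)∇Q(pᵗ) onto Ω_{k,p⁰,δ}, L > λ₁. Then Q(pᵗ) - Q(pᵗ⁺¹) ≥ ((L-λ₁)/2)‖pᵗ⁺¹ - pᵗ‖₂² for all t, the sequence Q(pᵗ) converges, and ‖pᵗ⁺¹ - pᵗ‖₂ → 0. -/

import Mathlib

open Matrix Filter

private lemma quad_form_le {n : ℕ} {S : Matrix (Fin n) (Fin n) ℝ} (hS : S.IsHermitian)
    {lam1 : ℝ} (h : ∀ i, hS.eigenvalues i ≤ lam1) (x : Fin n → ℝ) :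
    x ⬝ᵥ S *ᵥ x ≤ lam1 * (x ⬝ᵥ x) := by
  set U : Matrix (Fin n) (Fin n) ℝ := (hS.eigenvectorUnitary : Matrix (Fin n) (Fin n) ℝ) with hU
  have hU1 : (U * star U) = 1 := (Matrix.mem_unitaryGroup_iff).mp hS.eigenvectorUnitary.2
  set y : Fin n → ℝ := star U *ᵥ x with hy
  have hvec : x ᵥ* U = y := by
    ext i
    simp [hy, Matrix.vecMul, Matrix.mulVec, dotProduct, Matrix.conjTranspose_apply,
      mul_comm]
  have hxx : x ⬝ᵥ x = y ⬝ᵥ y := by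
    have : x ⬝ᵥ x = x ⬝ᵥ ((U * star U) *ᵥ x) := by rw [hU1, Matrix.one_mulVec]
    rw [this, ← Matrix.mulVec_mulVec, Matrix.dotProduct_mulVec, hvec, hy]
  have hquad : x ⬝ᵥ S *ᵥ x = ∑ i, hS.eigenvalues i * (y i)^2 := by
    conv_lhs => rw [hS.spectral_theorem, Unitary.conjStarAlgAut_apply]
    rw [← Matrix.mulVec_mulVec, Matrix.dotProduct_mulVec, ← Matrix.vecMul_vecMul, hvec, ← hy]
    simp only [dotProduct, Matrix.vecMul_diagonal, Function.comp]
    exact Finset.sum_congr rfl fun i _ => by simp [sq]; ring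
  rw [hquad, hxx]
  have : y ⬝ᵥ y = ∑ i, (y i)^2 := by simp [dotProduct, sq]
  rw [this, Finset.mul_sum]
  exact Finset.sum_le_sum fun i _ => mul_le_mul_of_nonneg_right (h i) (sq_nonneg _)

theorem gpa_sequence_convergence {n k : ℕ}
    (S : Matrix (Fin n) (Fin n) ℝ) (f p0 δ : Fin n → ℝ) (hPD : S.PosDef)
    (hδ : ∀ i, 0 < δ i)
    (Q : (Fin n → ℝ) → ℝ)
    (hQ : ∀ p, Q p = (1/2) * (p ⬝ᵥ S.mulVec p) - f ⬝ᵥ p)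
    (lam1 : ℝ) (hlam1 : IsGreatest (Set.range hPD.1.eigenvalues) lam1)
    (L : ℝ) (hL : lam1 < L)
    (Ω : Set (Fin n → ℝ))
    (hΩ : Ω = {p | {i | p i ≠ p0 i}.ncard ≤ k ∧
      ∀ i, p i = p0 i ∨ p0 i + δ i ≤ p i ∨ p i ≤ p0 i - δ i})
    (p : ℕ → Fin n → ℝ) (hfeas : ∀ t, p t ∈ Ω)
    (hiter : ∀ t, ∀ p'' ∈ Ω,
      ∑ i, (p (t+1) i - (p t i - (1/L) * (S.mulVec (p t) - f) i)) ^ 2 ≤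
        ∑ i, (p'' i - (p t i - (1/L) * (S.mulVec (p t) - f) i)) ^ 2) :
    (∀ t, Q (p t) - Q (p (t+1)) ≥ ((L - lam1) / 2) * ∑ i, (p (t+1) i - p t i) ^ 2) ∧
    (∃ Qinf : ℝ, Tendsto (fun t => Q (p t)) atTop (nhds Qinf)) ∧
    Tendsto (fun t => Real.sqrt (∑ i, (p (t+1) i - p t i) ^ 2)) atTop (nhds 0) := by
  -- positivity of lam1 and L
  obtain ⟨i0, hi0⟩ := hlam1.1
  have hlam1pos : 0 < lam1 := hi0 ▸ hPD.eigenvalues_pos i0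
  have hLpos : 0 < L := hlam1pos.trans hL
  have hev : ∀ i, hPD.1.eigenvalues i ≤ lam1 := fun i => hlam1.2 ⟨i, rfl⟩
  -- symmetry of the quadratic form
  have hsymm : ∀ u v : Fin n → ℝ, u ⬝ᵥ S *ᵥ v = v ⬝ᵥ S *ᵥ u := by
    have hT : Sᵀ = S := by
      have h := hPD.1
      rwa [Matrix.IsHermitian, Matrix.conjTranspose_eq_transpose_of_trivial] at h
    intro u v
    rw [Matrix.dotProduct_mulVec, ← Matrix.mulVec_transpose, hT, dotProduct_comm]
  -- part 1: the descent inequality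
  have part1 : ∀ t, Q (p t) - Q (p (t+1)) ≥ ((L - lam1) / 2) * ∑ i, (p (t+1) i - p t i) ^ 2 := by
    intro t
    set a := p t with ha
    set b := p (t+1) with hb
    set d : Fin n → ℝ := b - a with hd
    set g : Fin n → ℝ := S *ᵥ a - f with hg
    -- projection inequality with p'' = p t
    have hproj := hiter t (p t) (hfeas t)
    have hexp1 : ∀ i, (b i - (a i - (1/L) * g i))^2 =
        d i ^ 2 + (2/L) * (d i * g i) + ((1/L) * g i)^2 := by
      intro i
      have : d i = b i - a i := rfl
      rw [this]; field_simp; ring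
    have hexp2 : ∀ i, (a i - (a i - (1/L) * g i))^2 = ((1/L) * g i)^2 := by
      intro i; ring
    have hgd : ∑ i, d i * g i ≤ -(L/2) * ∑ i, d i ^ 2 := by
      have h1 : ∑ i, (d i ^ 2 + (2/L) * (d i * g i) + ((1/L) * g i)^2) ≤
          ∑ i, ((1/L) * g i)^2 := by
        calc ∑ i, (d i ^ 2 + (2/L) * (d i * g i) + ((1/L) * g i)^2)
            = ∑ i, (b i - (a i - (1/L) * g i))^2 :=
              Finset.sum_congr rfl fun i _ => (hexp1 i).symm
          _ ≤ ∑ i, (a i - (a i - (1/L) * g i))^2 := hproj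
          _ = ∑ i, ((1/L) * g i)^2 := Finset.sum_congr rfl fun i _ => hexp2 i
      rw [Finset.sum_add_distrib, Finset.sum_add_distrib, ← Finset.mul_sum] at h1
      have h2 : ∑ i, d i ^ 2 + (2/L) * ∑ i, (d i * g i) ≤ 0 := by linarith
      have hLne : L ≠ 0 := ne_of_gt hLpos
      have h5 : ∑ i, d i * g i = (L/2) * ((2/L) * ∑ i, d i * g i) := by field_simp
      rw [h5]
      have h6 : (2/L) * ∑ i, (d i * g i) ≤ -∑ i, d i ^ 2 := by linarith
      calc (L/2) * ((2/L) * ∑ i, d i * g i) ≤ (L/2) * (-∑ i, d i ^ 2) :=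
            mul_le_mul_of_nonneg_left h6 (by positivity)
        _ = -(L/2) * ∑ i, d i ^ 2 := by ring
    -- expansion of Q
    have hQd : Q b - Q a = (∑ i, d i * g i) + (1/2) * (d ⬝ᵥ S *ᵥ d) := by
      have hdg : ∑ i, d i * g i = d ⬝ᵥ g := rfl
      rw [hQ a, hQ b, hdg, hg, hd]
      have hsub : (b - a) ⬝ᵥ S *ᵥ (b - a) =
          b ⬝ᵥ S *ᵥ b - b ⬝ᵥ S *ᵥ a - a ⬝ᵥ S *ᵥ b + a ⬝ᵥ S *ᵥ a := by
        simp [Matrix.mulVec_sub, dotProduct_sub, sub_dotProduct]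
        ring
      have hdgg : (b - a) ⬝ᵥ (S *ᵥ a - f) = b ⬝ᵥ S *ᵥ a - a ⬝ᵥ S *ᵥ a - b ⬝ᵥ f + a ⬝ᵥ f := by
        simp [dotProduct_sub, sub_dotProduct]
        ring
      have hcom1 : f ⬝ᵥ a = a ⬝ᵥ f := dotProduct_comm _ _
      have hcom2 : f ⬝ᵥ b = b ⬝ᵥ f := dotProduct_comm _ _
      have hs := hsymm a b
      rw [hsub, hdgg, hcom1, hcom2]
      linarith [hs]
    -- spectral bound
    have hspec : d ⬝ᵥ S *ᵥ d ≤ lam1 * (d ⬝ᵥ d) := quad_form_le hPD.1 hev d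
    have hdd : d ⬝ᵥ d = ∑ i, d i ^ 2 := by simp [dotProduct, sq]
    have hsum : ∑ i, (p (t+1) i - p t i) ^ 2 = ∑ i, d i ^ 2 := by
      exact Finset.sum_congr rfl fun i _ => rfl
    rw [hsum]
    rw [hdd] at hspec
    nlinarith [hgd, hQd, hspec, Finset.sum_nonneg (fun i (_ : i ∈ Finset.univ) => sq_nonneg (d i))]
  refine ⟨part1, ?_⟩
  -- boundedness below of Q
  have hdetu : IsUnit S.det := isUnit_iff_ne_zero.mpr (ne_of_gt hPD.det_pos)
  set c : Fin n → ℝ := S⁻¹ *ᵥ f with hc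
  have hSc : S *ᵥ c = f := by
    rw [hc, Matrix.mulVec_mulVec, Matrix.mul_nonsing_inv _ hdetu, Matrix.one_mulVec]
  have hQlb : ∀ x, Q x ≥ -(1/2) * (c ⬝ᵥ S *ᵥ c) := by
    intro x
    have hposq : 0 ≤ (x - c) ⬝ᵥ S *ᵥ (x - c) := by
      have := hPD.posSemidef.re_dotProduct_nonneg (x - c)
      simpa using this
    have hsub : (x - c) ⬝ᵥ S *ᵥ (x - c) =
        x ⬝ᵥ S *ᵥ x - x ⬝ᵥ S *ᵥ c - c ⬝ᵥ S *ᵥ x + c ⬝ᵥ S *ᵥ c := by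
      simp [Matrix.mulVec_sub, dotProduct_sub, sub_dotProduct]
      ring
    have hs := hsymm x c
    have hfx : f ⬝ᵥ x = x ⬝ᵥ S *ᵥ c := by
      rw [← hSc, dotProduct_comm]
    rw [hQ x]
    rw [hsub, hs] at hposq
    linarith
  -- monotonicity
  have hmono : ∀ t, Q (p (t+1)) ≤ Q (p t) := by
    intro t
    have h1 := part1 t
    have h2 : 0 ≤ ((L - lam1) / 2) * ∑ i, (p (t+1) i - p t i) ^ 2 := by
      apply mul_nonneg (by linarith)
      exact Finset.sum_nonneg fun i _ => sq_nonneg _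
    linarith
  have hanti : Antitone fun t => Q (p t) :=
    antitone_nat_of_succ_le hmono
  have hbdd : BddBelow (Set.range fun t => Q (p t)) := by
    refine ⟨-(1/2) * (c ⬝ᵥ S *ᵥ c), ?_⟩
    rintro x ⟨t, rfl⟩
    exact hQlb (p t)
  have hconv : Tendsto (fun t => Q (p t)) atTop (nhds (⨅ t, Q (p t))) :=
    tendsto_atTop_ciInf hanti hbdd
  refine ⟨⟨_, hconv⟩, ?_⟩
  -- part 3
  set Qinf := ⨅ t, Q (p t) with hQinf
  have hconv' : Tendsto (fun t => Q (p (t+1))) atTop (nhds Qinf) :=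
    hconv.comp (tendsto_add_atTop_nat 1)
  have hdiff : Tendsto (fun t => Q (p t) - Q (p (t+1))) atTop (nhds 0) := by
    have := hconv.sub hconv'
    simpa using this
  have hsq : Tendsto (fun t => ∑ i, (p (t+1) i - p t i) ^ 2) atTop (nhds 0) := by
    have hsz : Tendsto (fun t => ((L - lam1) / 2) * ∑ i, (p (t+1) i - p t i) ^ 2)
        atTop (nhds 0) := by
      refine squeeze_zero (g := fun t => Q (p t) - Q (p (t+1))) (fun t => ?_) (fun t => ?_) hdiff
      · apply mul_nonneg (by linarith)
        exact Finset.sum_nonneg fun i _ => sq_nonneg _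
      · linarith [part1 t]
    have h2 : Tendsto (fun t => (2 / (L - lam1)) *
        (((L - lam1) / 2) * ∑ i, (p (t+1) i - p t i) ^ 2)) atTop (nhds 0) := by
      have := hsz.const_mul (2 / (L - lam1))
      simpa using this
    have heq : ∀ t, (2 / (L - lam1)) * (((L - lam1) / 2) * ∑ i, (p (t+1) i - p t i) ^ 2) =
        ∑ i, (p (t+1) i - p t i) ^ 2 := by
      intro t
      have : L - lam1 ≠ 0 := by linarith
      field_simp
    simpa [heq] using h2
  have := (Real.continuous_sqrt.tendsto 0).comp hsq
  simpa [Function.comp_def] using this
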